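/- Let R : J ⥤ Alg T be a small diagram of T-algebras, with underlying diagram U ∘ R in C and action maps ξ_j : T(U R_j) → U R_j. Let c : colim_J T(U R_j) → colim_J U R_j be the map induced by the ξ_j, and let α : colim_J T(U R_j) → T(colim_J U R_j) be the canonical comparison map (induced by applying T to the colimit cocone of U ∘ R). Then the pair of T-algebra morphisms Free_T(c) and (μ_T)_{colim U R} ∘ T(α) from Free_T(colim_J T(U R_j)) to Free_T(colim_J U R_j) is a reflexive pair (split by Free_T applied to the map induced by the units (η_T)_{U R_j}), and its coequalizer in Alg T is a colimit of the diagram R. -/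

import Mathlib

open CategoryTheory CategoryTheory.Limits

universe v₁ u₁

variable {C : Type u₁} [Category.{v₁} C] [HasColimits C]
variable {J : Type v₁} [SmallCategory J]

namespace MonadColim

variable (T : Monad C) (R : J ⥤ Monad.Algebra T)

/-- The underlying diagram in `C` of a diagram of `T`-algebras. -/
abbrev UR : J ⥤ C := R ⋙ T.forget

/-- The natural transformation `T(U R_j) ⟶ U R_j` given by the action maps `ξ_j`. -/
def xi : UR T R ⋙ (T : C ⥤ C) ⟶ UR T R where
  app j := (R.obj j).a
  naturality _ _ u := (R.map u).h

/-- The map `colim_J T(U R_j) ⟶ colim_J U R_j` induced by the action maps. -/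
noncomputable def cmap : colimit (UR T R ⋙ (T : C ⥤ C)) ⟶ colimit (UR T R) := colimMap (xi T R)

/-- The canonical comparison map `colim_J T(U R_j) ⟶ T(colim_J U R_j)`. -/
noncomputable def alpha : colimit (UR T R ⋙ (T : C ⥤ C)) ⟶ (T : C ⥤ C).obj (colimit (UR T R)) :=
  colimit.post (UR T R) (T : C ⥤ C)

/-- The first map of the reflexive pair: `Free_T` applied to the map induced by the actions. -/
noncomputable def first : (Monad.free T).obj (colimit (UR T R ⋙ (T : C ⥤ C))) ⟶
    (Monad.free T).obj (colimit (UR T R)) :=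
  (Monad.free T).map (cmap T R)

/-- The second map of the reflexive pair: the `T`-algebra morphism of free algebras with
underlying map `(μ_T)_{colim U R} ∘ T(α)`. -/
noncomputable def second : (Monad.free T).obj (colimit (UR T R ⋙ (T : C ⥤ C))) ⟶
    (Monad.free T).obj (colimit (UR T R)) where
  f := (T : C ⥤ C).map (alpha T R) ≫ T.μ.app (colimit (UR T R))
  h := by
    change T.map (T.map (alpha T R) ≫ T.μ.app (colimit (UR T R))) ≫ T.μ.app (colimit (UR T R)) =
      T.μ.app (colimit (UR T R ⋙ (T : C ⥤ C))) ≫ T.map (alpha T R) ≫ T.μ.app (colimit (UR T R))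
    rw [Functor.map_comp, Category.assoc, T.assoc]
    have hn := T.μ.naturality (alpha T R)
    dsimp at hn
    rw [← Category.assoc, hn, Category.assoc]

/-- The common section: `Free_T` applied to the map induced by the unit components `η_{U R_j}`. -/
noncomputable def sect : (Monad.free T).obj (colimit (UR T R)) ⟶
    (Monad.free T).obj (colimit (UR T R ⋙ (T : C ⥤ C))) :=
  (Monad.free T).map (colimMap
    { app := fun j => T.η.app ((UR T R).obj j)
      naturality := fun _ _ u => T.η.naturality ((UR T R).map u) })

/-! ### Auxiliary lemmas -/

lemma sect_comp_first : sect T R ≫ first T R = 𝟙 _ := by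
  rw [sect, first, ← Functor.map_comp]
  have : (colimMap
      { app := fun j => T.η.app ((UR T R).obj j)
        naturality := fun _ _ u => T.η.naturality ((UR T R).map u) } : _) ≫ cmap T R = 𝟙 _ := by
    apply colimit.hom_ext
    intro j
    simp [cmap, xi, Monad.Algebra.unit_assoc]
    exact (R.obj j).unit_assoc _
  rw [this, CategoryTheory.Functor.map_id]

lemma etaMap_comp_alpha :
    colimMap
      { app := fun j => T.η.app ((UR T R).obj j)
        naturality := fun _ _ u => T.η.naturality ((UR T R).map u) } ≫ alpha T R =
    T.η.app (colimit (UR T R)) := by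
  apply colimit.hom_ext
  intro j
  rw [ι_colimMap_assoc, alpha, colimit.ι_post]
  simpa using (T.η.naturality (colimit.ι (UR T R) j)).symm

lemma sect_comp_second : sect T R ≫ second T R = 𝟙 _ := by
  ext1
  show (T : C ⥤ C).map _ ≫ (T : C ⥤ C).map (alpha T R) ≫ T.μ.app _ = _
  rw [← Functor.map_comp_assoc, etaMap_comp_alpha, Monad.right_unit]
  rfl

/-- Two algebra morphisms out of a free algebra agree if they agree after precomposing
with the unit. -/
lemma free_hom_ext {X : C} {B : Monad.Algebra T} (p p' : (Monad.free T).obj X ⟶ B)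
    (w : T.η.app X ≫ p.f = T.η.app X ≫ p'.f) : p = p' := by
  have key : ∀ r : (Monad.free T).obj X ⟶ B,
      r.f = (T : C ⥤ C).map (T.η.app X ≫ r.f) ≫ B.a := by
    intro r
    erw [Functor.map_comp, Category.assoc, r.h]
    show _ = (T : C ⥤ C).map (T.η.app X) ≫ T.μ.app X ≫ r.f
    erw [Monad.right_unit_assoc]
  ext1
  rw [key p, key p', w]

/-- The key consequence of coequalizing the pair. -/
lemma star {B : Monad.Algebra T} (q : (Monad.free T).obj (colimit (UR T R)) ⟶ B)
    (hq : first T R ≫ q = second T R ≫ q) :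
    cmap T R ≫ T.η.app (colimit (UR T R)) ≫ q.f = alpha T R ≫ q.f := by
  have h := congrArg Monad.Algebra.Hom.f hq
  simp only [Monad.Algebra.comp_f] at h
  have h1 : T.η.app (colimit (UR T R ⋙ (T : C ⥤ C))) ≫ (first T R).f ≫ q.f =
      T.η.app (colimit (UR T R ⋙ (T : C ⥤ C))) ≫ (second T R).f ≫ q.f := by erw [h]; rfl
  have e1 : T.η.app (colimit (UR T R ⋙ (T : C ⥤ C))) ≫ (first T R).f =
      cmap T R ≫ T.η.app (colimit (UR T R)) := (T.η.naturality (cmap T R)).symm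
  have e2 : T.η.app (colimit (UR T R ⋙ (T : C ⥤ C))) ≫ (second T R).f = alpha T R := by
    show T.η.app _ ≫ (T : C ⥤ C).map (alpha T R) ≫ T.μ.app _ = _
    rw [← T.η.naturality_assoc (alpha T R)]
    simp
  exact ((Category.assoc _ _ _).symm.trans ((congrArg (· ≫ q.f) e1.symm).trans
    (Category.assoc _ _ _))).trans (h1.trans ((Category.assoc _ _ _).symm.trans (congrArg (· ≫ q.f) e2)))

lemma coconeOf_h {B : Monad.Algebra T} (q : (Monad.free T).obj (colimit (UR T R)) ⟶ B)
    (hq : first T R ≫ q = second T R ≫ q) (j : J) :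
    (T : C ⥤ C).map (colimit.ι (UR T R) j ≫ T.η.app (colimit (UR T R)) ≫ q.f) ≫ B.a =
      (R.obj j).a ≫ colimit.ι (UR T R) j ≫ T.η.app (colimit (UR T R)) ≫ q.f := by
  have hs := star T R q hq
  have h1 : colimit.ι (UR T R ⋙ (T : C ⥤ C)) j ≫
      cmap T R ≫ T.η.app (colimit (UR T R)) ≫ q.f =
      colimit.ι (UR T R ⋙ (T : C ⥤ C)) j ≫ alpha T R ≫ q.f := by rw [hs]
  rw [cmap, ι_colimMap_assoc] at h1
  erw [alpha, colimit.ι_post_assoc] at h1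
  simp only [xi] at h1
  erw [h1]
  erw [Functor.map_comp, Functor.map_comp, Category.assoc, Category.assoc, q.h]
  show (T : C ⥤ C).map _ ≫ (T : C ⥤ C).map _ ≫ T.μ.app _ ≫ q.f = _
  erw [Monad.right_unit_assoc]

/-- The cocone on `R` induced by any algebra morphism coequalizing the pair. -/
@[simps]
noncomputable def coconeOf {B : Monad.Algebra T} (q : (Monad.free T).obj (colimit (UR T R)) ⟶ B)
    (hq : first T R ≫ q = second T R ≫ q) : Cocone R where
  pt := B
  ι :=
    { app := fun j =>
        { f := colimit.ι (UR T R) j ≫ T.η.app (colimit (UR T R)) ≫ q.f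
          h := coconeOf_h T R q hq j }
      naturality := fun j j' u => by
        ext1
        show (UR T R).map u ≫ colimit.ι (UR T R) j' ≫ _ = (colimit.ι (UR T R) j ≫ _) ≫ 𝟙 _
        rw [Category.comp_id, ← Category.assoc, colimit.w (UR T R) u] }

/-- The canonical descent map for the colimit of the underlying diagram. -/
noncomputable def dmap (s : Cocone R) : colimit (UR T R) ⟶ s.pt.A :=
  colimit.desc (UR T R) ((Monad.forget T).mapCocone s)

/-- The algebra morphism out of the free algebra induced by a cocone on `R`. -/
noncomputable def kHom (s : Cocone R) : (Monad.free T).obj (colimit (UR T R)) ⟶ s.pt where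
  f := (T : C ⥤ C).map (dmap T R s) ≫ s.pt.a
  h := by
    have hnat : (T : C ⥤ C).map ((T : C ⥤ C).map (dmap T R s)) ≫ T.μ.app s.pt.A =
        T.μ.app (colimit (UR T R)) ≫ (T : C ⥤ C).map (dmap T R s) := by
      simpa using T.μ.naturality (dmap T R s)
    erw [Functor.map_comp, Category.assoc, ← s.pt.assoc, reassoc_of% hnat]
    rfl

lemma kHom_coequalizes (s : Cocone R) : first T R ≫ kHom T R s = second T R ≫ kHom T R s := by
  have key : cmap T R ≫ dmap T R s = alpha T R ≫ (T : C ⥤ C).map (dmap T R s) ≫ s.pt.a := by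
    apply colimit.hom_ext
    intro j
    erw [cmap, ι_colimMap_assoc, alpha, colimit.ι_post_assoc, dmap, colimit.ι_desc,
      ← Functor.map_comp_assoc, colimit.ι_desc]
    exact ((s.ι.app j).h).symm
  ext1
  show (T : C ⥤ C).map (cmap T R) ≫ (T : C ⥤ C).map (dmap T R s) ≫ s.pt.a =
    ((T : C ⥤ C).map (alpha T R) ≫ T.μ.app _) ≫ (T : C ⥤ C).map (dmap T R s) ≫ s.pt.a
  rw [← Functor.map_comp_assoc, key, Category.assoc, ← T.μ.naturality_assoc (dmap T R s),
    s.pt.assoc, Functor.map_comp, Functor.map_comp]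
  simp only [Category.assoc]
  rfl

lemma eta_comp_kHom_f (s : Cocone R) (j : J) :
    colimit.ι (UR T R) j ≫ T.η.app (colimit (UR T R)) ≫ (kHom T R s).f = (s.ι.app j).f := by
  have hnat : T.η.app (colimit (UR T R)) ≫ (T : C ⥤ C).map (dmap T R s) =
      dmap T R s ≫ T.η.app s.pt.A := by simpa using (T.η.naturality (dmap T R s)).symm
  show colimit.ι (UR T R) j ≫ T.η.app (colimit (UR T R)) ≫
      ((T : C ⥤ C).map (dmap T R s) ≫ s.pt.a) = _
  erw [reassoc_of% hnat, s.pt.unit, Category.comp_id, dmap, colimit.ι_desc]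
  rfl

/-- The lifted cocone is colimiting. -/
noncomputable def coconeOfIsColimit (cf : Cofork (first T R) (second T R)) (hc : IsColimit cf) :
    IsColimit (coconeOf T R cf.π cf.condition) where
  desc s := hc.desc (Cofork.ofπ (kHom T R s) (kHom_coequalizes T R s))
  fac s j := by
    ext1
    have hπ : cf.π ≫ hc.desc (Cofork.ofπ (kHom T R s) (kHom_coequalizes T R s)) = kHom T R s :=
      Cofork.IsColimit.π_desc hc
    show (colimit.ι (UR T R) j ≫ T.η.app (colimit (UR T R)) ≫ cf.π.f) ≫
      (hc.desc (Cofork.ofπ (kHom T R s) (kHom_coequalizes T R s))).f = (s.ι.app j).f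
    have := congrArg Monad.Algebra.Hom.f hπ
    simp only [Monad.Algebra.comp_f] at this
    erw [Category.assoc, Category.assoc, this, ← Category.assoc]
    erw [Category.assoc]; exact eta_comp_kHom_f T R s j
  uniq s m hm := by
    apply Cofork.IsColimit.hom_ext hc
    have hπ : cf.π ≫ hc.desc (Cofork.ofπ (kHom T R s) (kHom_coequalizes T R s)) = kHom T R s :=
      Cofork.IsColimit.π_desc hc
    rw [hπ]
    apply free_hom_ext
    apply colimit.hom_ext
    intro j
    show colimit.ι (UR T R) j ≫ T.η.app (colimit (UR T R)) ≫ cf.π.f ≫ m.f =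
      colimit.ι (UR T R) j ≫ T.η.app (colimit (UR T R)) ≫ (kHom T R s).f
    rw [eta_comp_kHom_f T R s j]
    have := congrArg Monad.Algebra.Hom.f (hm j)
    simp only [Monad.Algebra.comp_f, coconeOf_ι_app_f] at this
    erw [Category.assoc, Category.assoc] at this; exact this

end MonadColim

open MonadColim in
/-- For a small diagram `R` of `T`-algebras (`T` a monad preserving reflexive
coequalizers on a cocomplete category), the pair of free-algebra morphisms `Free_T(c)` and
`μ ∘ T(α)` is a reflexive pair, split by `Free_T` of the map induced by the units, and any
coequalizer of this pair in the category of `T`-algebras is a colimit of `R`. -/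
theorem colimit_as_reflexive_coequalizer
    (T : Monad C)
    (hT : ∀ ⦃X Y : C⦄ (p q : X ⟶ Y), IsReflexivePair p q →
      Nonempty (PreservesColimit (parallelPair p q) (T : C ⥤ C)))
    (R : J ⥤ Monad.Algebra T) :
    (sect T R ≫ first T R = 𝟙 _ ∧ sect T R ≫ second T R = 𝟙 _) ∧
    HasCoequalizer (first T R) (second T R) ∧
    (∀ (cf : Cofork (first T R) (second T R)), IsColimit cf →
      ∃ t : Cocone R, t.pt = cf.pt ∧ Nonempty (IsColimit t)) := by
  have h1 := sect_comp_first T R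
  have h2 := sect_comp_second T R
  refine ⟨⟨h1, h2⟩, ?_, ?_⟩
  · -- the coequalizer exists because the forgetful functor creates it
    have hrefl : IsReflexivePair (first T R).f (second T R).f := by
      refine IsReflexivePair.mk' (sect T R).f ?_ ?_
      · rw [← Monad.Algebra.comp_f, h1]; rfl
      · rw [← Monad.Algebra.comp_f, h2]; rfl
    have hreflT : IsReflexivePair ((T : C ⥤ C).map (first T R).f)
        ((T : C ⥤ C).map (second T R).f) := by
      refine IsReflexivePair.mk' ((T : C ⥤ C).map (sect T R).f) ?_ ?_
      · rw [← Functor.map_comp, ← Monad.Algebra.comp_f, h1]; simp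
      · rw [← Functor.map_comp, ← Monad.Algebra.comp_f, h2]; simp
    letI i1 : PreservesColimit (parallelPair
        ((parallelPair (first T R) (second T R) ⋙ Monad.forget T).map
          WalkingParallelPairHom.left)
        ((parallelPair (first T R) (second T R) ⋙ Monad.forget T).map
          WalkingParallelPairHom.right)) (T : C ⥤ C) := (hT _ _ hrefl).some
    letI i2 : PreservesColimit (parallelPair
        (((parallelPair (first T R) (second T R) ⋙ Monad.forget T) ⋙ (T : C ⥤ C)).map
          WalkingParallelPairHom.left)
        (((parallelPair (first T R) (second T R) ⋙ Monad.forget T) ⋙ (T : C ⥤ C)).map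
          WalkingParallelPairHom.right)) (T : C ⥤ C) := (hT _ _ hreflT).some
    letI : PreservesColimit (parallelPair (first T R) (second T R) ⋙ Monad.forget T)
        (T : C ⥤ C) := by
      exact preservesColimit_of_iso_diagram _
        (diagramIsoParallelPair (parallelPair (first T R) (second T R) ⋙ Monad.forget T)).symm
    letI : PreservesColimit ((parallelPair (first T R) (second T R) ⋙ Monad.forget T) ⋙
        (T : C ⥤ C)) (T : C ⥤ C) := by
      exact preservesColimit_of_iso_diagram _
        (diagramIsoParallelPair ((parallelPair (first T R) (second T R) ⋙ Monad.forget T) ⋙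
          (T : C ⥤ C))).symm
    exact hasColimit_of_created (parallelPair (first T R) (second T R)) (Monad.forget T)
  · intro cf hc
    exact ⟨coconeOf T R cf.π cf.condition, rfl, ⟨coconeOfIsColimit T R cf hc⟩⟩
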